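/- Let n ∈ ℕ and define H(s;θ) = ∫_0^{−θ} exp(πi(n+2)(s+t))·G_n(s+t) dt. For all real θ, s with 0 ≤ θ < s ≤ 1/2, one has |Re H(s;θ)| ≤ θ/2 + (1/(4(2n+3)))·(1/2 + 1/π)·( 1/s + 1/(s−θ) ). -/

import Mathlib

open scoped Classical

/-- `G_n(x) = sin((n+1)πx)/sin(πx)` for `x ∉ ℤ`, continuously extended by `G_n(x) = n+1`
for `x ∈ ℤ`. -/
noncomputable def G (n : ℕ) (x : ℝ) : ℝ :=
  if ∃ m : ℤ, x = (m : ℝ) then (n : ℝ) + 1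
  else Real.sin (((n : ℝ) + 1) * Real.pi * x) / Real.sin (Real.pi * x)

/-- `H(s;θ) = ∫_0^{−θ} e^{πi(n+2)(s+t)} G_n(s+t) dt`. -/
noncomputable def Hfun (n : ℕ) (s θ : ℝ) : ℂ :=
  ∫ t in (0 : ℝ)..(-θ),
    Complex.exp ((Real.pi : ℂ) * Complex.I * ((n : ℂ) + 2) * ((s : ℂ) + (t : ℂ))) *
      Complex.ofReal (G n (s + t))

open Real intervalIntegral MeasureTheory

lemma two_mul_le_sin' {x : ℝ} (hx0 : 0 < x) (hx : x ≤ 1/2) : 2*x ≤ Real.sin (π * x) := by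
  have h := Real.mul_le_sin (x := π * x) (by positivity) (by nlinarith [Real.pi_pos])
  have hπ := Real.pi_pos
  have : 2/π * (π * x) = 2*x := by field_simp
  linarith [this ▸ h]

lemma exp_re_helper (y r : ℝ) :
    (Complex.exp ((y:ℂ) * Complex.I) * (r:ℂ)).re = Real.cos y * r := by
  simp [Complex.mul_re, Complex.exp_ofReal_mul_I_re, Complex.exp_ofReal_mul_I_im]

lemma G_eq' {n : ℕ} {x : ℝ} (hx0 : 0 < x) (hx : x ≤ 1/2) :
    G n x = Real.sin (((n : ℝ) + 1) * π * x) / Real.sin (π * x) := by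
  rw [G, if_neg]
  rintro ⟨m, rfl⟩
  have h1 : (0:ℤ) < m := by exact_mod_cast hx0
  have : (1:ℝ) ≤ m := by exact_mod_cast h1
  linarith

lemma final_algebra {s a N p : ℝ} (hs : 0 < s) (ha : 0 < a) (hN : 0 < N) (hp : 0 < p) :
    1/(4*s) * (1/(N*p)) + 1/(4*a) * (1/(N*p)) + (1/(8*N)) * (1/a - 1/s)
      ≤ 1/(4*N) * (1/2 + 1/p) * (1/s + 1/a) := by
  have hq : 1/(4*N) * (1/2 + 1/p) * (1/s + 1/a)
      - (1/(4*s) * (1/(N*p)) + 1/(4*a) * (1/(N*p)) + (1/(8*N)) * (1/a - 1/s))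
      = (1/4) * (1/N) * (1/s) := by
    field_simp
    ring
  nlinarith [mul_pos (mul_pos (by norm_num : (0:ℝ) < 1/4) (by positivity : (0:ℝ) < 1/N))
    (by positivity : (0:ℝ) < 1/s)]

set_option maxHeartbeats 1000000 in
/-- Bound on the real part of `H(s;θ)` for `0 ≤ θ < s ≤ 1/2`:
`|Re H(s;θ)| ≤ θ/2 + (1/(4(2n+3)))(1/2 + 1/π)(1/s + 1/(s−θ))`. -/
theorem Hfun_re_bound_pos (n : ℕ) (s θ : ℝ)
    (hθ0 : 0 ≤ θ) (hθs : θ < s) (hs : s ≤ 1 / 2) :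
    |(Hfun n s θ).re| ≤ θ / 2 +
      (1 / (4 * (2 * (n : ℝ) + 3))) * (1 / 2 + 1 / Real.pi) *
        (1 / s + 1 / (s - θ)) := by
  have hπ := Real.pi_pos
  set a : ℝ := s - θ with ha
  have ha0 : 0 < a := by simp [ha]; linarith
  have hs0 : 0 < s := lt_of_le_of_lt hθ0 hθs
  have hab : a ≤ s := by simp [ha]; linarith
  set N : ℝ := 2*(n:ℝ)+3 with hN
  have hN0 : (0:ℝ) < N := by positivity
  -- facts on the interval
  have hmem : ∀ x ∈ Set.Icc a s, 0 < x ∧ x ≤ 1/2 := fun x hx => ⟨lt_of_lt_of_le ha0 hx.1, le_trans hx.2 hs⟩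
  have hsin : ∀ x ∈ Set.Icc a s, 2*a ≤ Real.sin (π * x) := by
    intro x hx
    have h := hmem x hx
    have := two_mul_le_sin' h.1 h.2
    linarith [hx.1]
  have hsin_ne : ∀ x ∈ Set.Icc a s, Real.sin (π * x) ≠ 0 := by
    intro x hx; have := hsin x hx; exact ne_of_gt (by linarith)
  -- the real integrand
  set f : ℝ → ℝ := fun x => Real.cos (π*((n:ℝ)+2)*x) * (Real.sin (((n:ℝ)+1)*π*x) / Real.sin (π*x)) with hf
  -- step 1: rewrite Hfun
  have huIcc : Set.uIcc (0:ℝ) (-θ) = Set.Icc (-θ) 0 := by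
    rw [Set.uIcc_of_ge]; linarith
  have hshift : ∀ t ∈ Set.uIcc (0:ℝ) (-θ), s + t ∈ Set.Icc a s := by
    intro t ht
    rw [huIcc] at ht
    exact ⟨by simp [ha]; linarith [ht.1], by linarith [ht.2]⟩
  have h1 : Hfun n s θ = ∫ t in (0:ℝ)..(-θ),
      Complex.exp (((π*((n:ℝ)+2)*(s+t) : ℝ) : ℂ) * Complex.I) *
        Complex.ofReal (Real.sin (((n:ℝ)+1)*π*(s+t)) / Real.sin (π*(s+t))) := by
    rw [Hfun]
    apply intervalIntegral.integral_congr
    intro t ht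
    have hm := hshift t ht
    have h := hmem _ hm
    simp only []
    rw [G_eq' h.1 h.2]
    congr 2
    push_cast
    ring
  -- integrability of the complex integrand
  have hcontsin : ContinuousOn (fun t : ℝ => Real.sin (((n:ℝ)+1)*π*(s+t)) / Real.sin (π*(s+t)))
      (Set.uIcc (0:ℝ) (-θ)) := by
    apply ContinuousOn.div
    · fun_prop
    · fun_prop
    · intro t ht
      exact hsin_ne _ (hshift t ht)
  have hint : IntervalIntegrable (fun t : ℝ =>
      Complex.exp (((π*((n:ℝ)+2)*(s+t) : ℝ) : ℂ) * Complex.I) *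
        Complex.ofReal (Real.sin (((n:ℝ)+1)*π*(s+t)) / Real.sin (π*(s+t)))) volume 0 (-θ) := by
    apply ContinuousOn.intervalIntegrable
    apply ContinuousOn.mul
    · apply Continuous.continuousOn; fun_prop
    · exact Complex.continuous_ofReal.comp_continuousOn hcontsin
  -- step 2: real part
  have h2 : (Hfun n s θ).re = ∫ t in (0:ℝ)..(-θ), f (s + t) := by
    rw [h1]
    calc (∫ t in (0:ℝ)..(-θ),
        Complex.exp (((π*((n:ℝ)+2)*(s+t) : ℝ) : ℂ) * Complex.I) *
          Complex.ofReal (Real.sin (((n:ℝ)+1)*π*(s+t)) / Real.sin (π*(s+t)))).re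
        = Complex.reCLM (∫ t in (0:ℝ)..(-θ),
        Complex.exp (((π*((n:ℝ)+2)*(s+t) : ℝ) : ℂ) * Complex.I) *
          Complex.ofReal (Real.sin (((n:ℝ)+1)*π*(s+t)) / Real.sin (π*(s+t)))) := rfl
      _ = ∫ t in (0:ℝ)..(-θ), Complex.reCLM (
        Complex.exp (((π*((n:ℝ)+2)*(s+t) : ℝ) : ℂ) * Complex.I) *
          Complex.ofReal (Real.sin (((n:ℝ)+1)*π*(s+t)) / Real.sin (π*(s+t)))) :=
        (Complex.reCLM.intervalIntegral_comp_comm hint).symm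
      _ = ∫ t in (0:ℝ)..(-θ), f (s + t) := by
        apply intervalIntegral.integral_congr
        intro t ht
        simp only [Complex.reCLM_apply, hf]
        exact exp_re_helper _ _
  -- step 3: change variables
  have h3 : (Hfun n s θ).re = - ∫ x in a..s, f x := by
    rw [h2, intervalIntegral.integral_comp_add_left f s]
    rw [add_zero]
    rw [show s + -θ = a by ring]
    rw [intervalIntegral.integral_symm]
  -- sharpen sin bound: sin(πx) ≥ 2x on the interval
  have hsinx : ∀ x ∈ Set.Icc a s, 2*x ≤ Real.sin (π * x) := by
    intro x hx
    have h := hmem x hx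
    exact two_mul_le_sin' h.1 h.2
  -- g and its derivative
  set g : ℝ → ℝ := fun x => (2 * Real.sin (π*x))⁻¹ with hg
  set g' : ℝ → ℝ := fun x => -(2*(π*Real.cos (π*x))) / (2*Real.sin (π*x))^2 with hg'
  set v : ℝ → ℝ := fun x => -Real.cos (N*π*x)/(N*π) with hv
  have hNπ : N*π ≠ 0 := by positivity
  have huab : Set.uIcc a s = Set.Icc a s := Set.uIcc_of_le hab
  -- trig rewriting of f
  have hfg : ∀ x ∈ Set.Icc a s, f x = Real.sin (N*π*x) * g x - 1/2 := by
    intro x hx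
    have hne := hsin_ne x hx
    have h1 := Real.sin_add (((n:ℝ)+1)*π*x) (π*((n:ℝ)+2)*x)
    have h2 := Real.sin_sub (((n:ℝ)+1)*π*x) (π*((n:ℝ)+2)*x)
    have e1 : ((n:ℝ)+1)*π*x + π*((n:ℝ)+2)*x = N*π*x := by rw [hN]; ring
    have e2 : ((n:ℝ)+1)*π*x - π*((n:ℝ)+2)*x = -(π*x) := by ring
    rw [e1] at h1; rw [e2, Real.sin_neg] at h2
    have key : Real.cos (π*((n:ℝ)+2)*x) * Real.sin (((n:ℝ)+1)*π*x)
        = (Real.sin (N*π*x) - Real.sin (π*x))/2 := by linarith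
    simp only [hf, hg]
    rw [← mul_div_assoc, key]
    field_simp
  -- derivatives
  have hvderiv : ∀ x ∈ Set.uIcc a s, HasDerivAt v (Real.sin (N*π*x)) x := by
    intro x _
    have h : HasDerivAt (fun y : ℝ => N*π*y) (N*π) x := by
      simpa using (hasDerivAt_id x).const_mul (N*π)
    have hc : HasDerivAt (fun y : ℝ => Real.cos (N*π*y)) (-Real.sin (N*π*x) * (N*π)) x :=
      (Real.hasDerivAt_cos (N*π*x)).comp x h
    have := (hc.neg).div_const (N*π)
    refine this.congr_deriv ?_
    field_simp
  have hgderiv : ∀ x ∈ Set.uIcc a s, HasDerivAt g (g' x) x := by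
    intro x hx
    rw [huab] at hx
    have hpd : HasDerivAt (fun y : ℝ => π*y) π x := by simpa using (hasDerivAt_id x).const_mul π
    have hsd : HasDerivAt (fun y : ℝ => 2*Real.sin (π*y)) (2*(Real.cos (π*x)*π)) x :=
      ((Real.hasDerivAt_sin (π*x)).comp x hpd).const_mul 2
    have hne : 2*Real.sin (π*x) ≠ 0 := mul_ne_zero two_ne_zero (hsin_ne x hx)
    have := hsd.inv hne
    refine this.congr_deriv ?_
    simp only [hg']
    ring
  -- integrabilities
  have h2sin_ne : ∀ x ∈ Set.Icc a s, 2 * Real.sin (π*x) ≠ 0 :=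
    fun x hx => mul_ne_zero two_ne_zero (hsin_ne x hx)
  have hgcont : ContinuousOn g (Set.Icc a s) := by
    apply ContinuousOn.inv₀ (by fun_prop) h2sin_ne
  have hvcont : Continuous v := by
    rw [hv]; fun_prop
  have hg'cont : ContinuousOn g' (Set.Icc a s) := by
    apply ContinuousOn.div (by fun_prop) (by fun_prop)
    intro x hx
    exact pow_ne_zero 2 (h2sin_ne x hx)
  have hg'int : IntervalIntegrable g' volume a s := by
    apply ContinuousOn.intervalIntegrable; rw [huab]; exact hg'cont
  have hsinNint : IntervalIntegrable (fun x => Real.sin (N*π*x)) volume a s :=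
    (Continuous.intervalIntegrable (by fun_prop) a s)
  have hsgint : IntervalIntegrable (fun x => g x * Real.sin (N*π*x)) volume a s := by
    apply ContinuousOn.intervalIntegrable; rw [huab]
    exact hgcont.mul (Continuous.continuousOn (by fun_prop))
  -- split the integral
  have h4 : ∫ x in a..s, f x = (∫ x in a..s, g x * Real.sin (N*π*x)) - θ/2 := by
    rw [intervalIntegral.integral_congr (g := fun x => g x * Real.sin (N*π*x) - 1/2)
        (fun x hx => by rw [huab] at hx; rw [hfg x hx]; ring)]
    rw [intervalIntegral.integral_sub hsgint intervalIntegrable_const,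
        intervalIntegral.integral_const, smul_eq_mul,
        show s - a = θ from by rw [ha]; ring]
    ring
  -- integration by parts
  have hibp : ∫ x in a..s, g x * Real.sin (N*π*x)
      = g s * v s - g a * v a - ∫ x in a..s, g' x * v x :=
    intervalIntegral.integral_mul_deriv_eq_deriv_mul hgderiv hvderiv hg'int hsinNint
  -- pointwise bounds
  have hgb : ∀ x ∈ Set.Icc a s, |g x| ≤ 1/(4*x) := by
    intro x hx
    have h2x := hsinx x hx
    have hx0 := (hmem x hx).1
    have hgpos : 0 < g x := by
      simp only [hg]; apply inv_pos.2; linarith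
    rw [abs_of_pos hgpos, one_div]
    simp only [hg]
    exact inv_anti₀ (by linarith) (by linarith)
  have hvb : ∀ x : ℝ, |v x| ≤ 1/(N*π) := by
    intro x
    simp only [hv]
    rw [abs_div, abs_neg, abs_of_pos (by positivity : (0:ℝ) < N*π)]
    gcongr
    exact Real.abs_cos_le_one _
  have hg'b : ∀ x ∈ Set.Icc a s, |g' x| ≤ π/(8*x^2) := by
    intro x hx
    have h2x := hsinx x hx
    have hx0 := (hmem x hx).1
    simp only [hg']
    rw [abs_div, abs_neg, abs_of_nonneg (sq_nonneg (2*Real.sin (π*x)))]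
    calc |2*(π*Real.cos (π*x))| / (2*Real.sin (π*x))^2
        ≤ (2*π) / (16*x^2) := by
          apply div_le_div₀ (by positivity)
          · rw [abs_mul, abs_of_nonneg (by norm_num : (0:ℝ) ≤ 2), abs_mul,
              abs_of_pos hπ]
            nlinarith [Real.abs_cos_le_one (π*x), hπ]
          · positivity
          · nlinarith
      _ = π/(8*x^2) := by ring
  -- bound the remainder integral
  have hx2int : IntervalIntegrable (fun x : ℝ => (x^2)⁻¹) volume a s := by
    apply ContinuousOn.intervalIntegrable; rw [huab]
    apply ContinuousOn.inv₀ (by fun_prop)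
    intro x hx
    exact pow_ne_zero 2 (ne_of_gt (hmem x hx).1)
  have hx2val : ∫ x in a..s, (x^2)⁻¹ = 1/a - 1/s := by
    have hder : ∀ x ∈ Set.uIcc a s, HasDerivAt (fun y : ℝ => -y⁻¹) ((x^2)⁻¹) x := by
      intro x hx
      rw [huab] at hx
      have hx0 := ne_of_gt (hmem x hx).1
      have := (hasDerivAt_inv hx0).neg
      refine this.congr_deriv ?_
      simp
    rw [intervalIntegral.integral_eq_sub_of_hasDerivAt hder hx2int]
    field_simp
    ring
  have habs : |∫ x in a..s, g' x * v x| ≤ (1/(8*N)) * (1/a - 1/s) := by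
    have hle : ∀ x ∈ Set.Icc a s, |g' x * v x| ≤ (1/(8*N)) * (x^2)⁻¹ := by
      intro x hx
      have hx0 := (hmem x hx).1
      rw [abs_mul]
      calc |g' x| * |v x| ≤ (π/(8*x^2)) * (1/(N*π)) :=
            mul_le_mul (hg'b x hx) (hvb x) (abs_nonneg _) (by positivity)
        _ = (1/(8*N)) * (x^2)⁻¹ := by
            field_simp
    have hint1 : IntervalIntegrable (fun x => |g' x * v x|) volume a s := by
      apply ContinuousOn.intervalIntegrable; rw [huab]
      exact (hg'cont.mul hvcont.continuousOn).abs
    have hint2 : IntervalIntegrable (fun x : ℝ => (1/(8*N)) * (x^2)⁻¹) volume a s :=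
      hx2int.const_mul _
    calc |∫ x in a..s, g' x * v x| ≤ ∫ x in a..s, |g' x * v x| :=
        intervalIntegral.abs_integral_le_integral_abs hab
      _ ≤ ∫ x in a..s, (1/(8*N)) * (x^2)⁻¹ :=
        intervalIntegral.integral_mono_on hab hint1 hint2 hle
      _ = (1/(8*N)) * (1/a - 1/s) := by
        rw [intervalIntegral.integral_const_mul, hx2val]
  -- assemble bound on the oscillatory integral
  have hJ : |∫ x in a..s, g x * Real.sin (N*π*x)| ≤
      1/(4*s) * (1/(N*π)) + 1/(4*a) * (1/(N*π)) + (1/(8*N)) * (1/a - 1/s) := by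
    rw [hibp]
    have t1 : |g s * v s| ≤ 1/(4*s) * (1/(N*π)) := by
      rw [abs_mul]
      exact mul_le_mul (hgb s ⟨hab, le_refl s⟩) (hvb s) (abs_nonneg _) (by positivity)
    have t2 : |g a * v a| ≤ 1/(4*a) * (1/(N*π)) := by
      rw [abs_mul]
      exact mul_le_mul (hgb a ⟨le_refl a, hab⟩) (hvb a) (abs_nonneg _) (by positivity)
    have u1 : |g s * v s - g a * v a - ∫ x in a..s, g' x * v x|
        ≤ |g s * v s - g a * v a| + |∫ x in a..s, g' x * v x| := abs_sub _ _
    have u2 : |g s * v s - g a * v a| ≤ |g s * v s| + |g a * v a| := abs_sub _ _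
    linarith [habs]
  have halg : 1/(4*s) * (1/(N*π)) + 1/(4*a) * (1/(N*π)) + (1/(8*N)) * (1/a - 1/s)
      ≤ 1/(4*N) * (1/2 + 1/π) * (1/s + 1/a) := final_algebra hs0 ha0 hN0 hπ
  calc |(Hfun n s θ).re| = |∫ x in a..s, f x| := by rw [h3, abs_neg]
    _ = |(∫ x in a..s, g x * Real.sin (N*π*x)) - θ/2| := by rw [h4]
    _ ≤ |∫ x in a..s, g x * Real.sin (N*π*x)| + |θ/2| := abs_sub _ _
    _ ≤ θ/2 + (1/(4*s) * (1/(N*π)) + 1/(4*a) * (1/(N*π)) + (1/(8*N)) * (1/a - 1/s)) := by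
        rw [abs_of_nonneg (by linarith : (0:ℝ) ≤ θ/2)]
        linarith [hJ]
    _ ≤ θ/2 + 1/(4*N) * (1/2 + 1/π) * (1/s + 1/a) := by linarith [halg]
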